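/- Boundedness of the consistency set: if the matrix [X_0; U_0] ∈ ℝ^{(n+m)×T} has full row rank (equivalently 𝖠 := [X_0; U_0][X_0; U_0]^T ≻ 0), then the set 𝓒 = {(A,B) : [A B] 𝖠 [A B]^T + [A B] 𝖡 + 𝖡^T [A B]^T + 𝖢 ⪯ 0} is bounded, for any 𝖡 ∈ ℝ^{(n+m)×n} and symmetric 𝖢 ∈ ℝ^{n×n}. -/

import Mathlib

open Matrix

lemma coercive {k : Type*} [Fintype k] [Nonempty k] {A : Matrix k k ℝ} (hA : A.PosDef) :
    ∃ c > 0, ∀ v : k → ℝ, c * (∑ j, v j ^ 2) ≤ v ⬝ᵥ A *ᵥ v := by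
  set E := EuclideanSpace ℝ k
  let g : (k → ℝ) → ℝ := fun y => y ⬝ᵥ A *ᵥ y
  have hg : Continuous g := by
    have : g = fun y => ∑ j, y j * ∑ l, A j l * y l := by
      funext y; simp [g, dotProduct, mulVec]
    rw [this]
    exact continuous_finset_sum _ fun j _ => (continuous_apply j).mul
      (continuous_finset_sum _ fun l _ => continuous_const.mul (continuous_apply l))
  let f : E → ℝ := fun x => g ((PiLp.continuousLinearEquiv 2 ℝ (fun _ : k => ℝ)) x)
  have hf : Continuous f := hg.comp (PiLp.continuousLinearEquiv 2 ℝ _).continuous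
  have hs : (Metric.sphere (0 : E) 1).Nonempty :=
    NormedSpace.sphere_nonempty.mpr zero_le_one
  obtain ⟨x₀, hx₀, hmin⟩ := (isCompact_sphere (0 : E) 1).exists_isMinOn hs hf.continuousOn
  have hx₀n : ‖x₀‖ = 1 := mem_sphere_zero_iff_norm.mp hx₀
  have hx₀0 : x₀ ≠ 0 := fun h => by simp [h] at hx₀n
  have hc : 0 < f x₀ := by
    have := hA.dotProduct_mulVec_pos (x := (PiLp.continuousLinearEquiv 2 ℝ (fun _ : k => ℝ)) x₀) (by
      simpa using fun h => hx₀0 ((PiLp.continuousLinearEquiv 2 ℝ (fun _ : k => ℝ)).map_eq_zero_iff.mp h))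
    simpa [f, g] using this
  refine ⟨f x₀, hc, fun v => ?_⟩
  rcases eq_or_ne v 0 with rfl | hv
  · simp
  · set s : ℝ := Real.sqrt (∑ j, v j ^ 2) with hs_def
    have hsum : 0 < ∑ j, v j ^ 2 := by
      have : ∃ j, v j ≠ 0 := by
        by_contra h; push_neg at h; exact hv (funext h)
      obtain ⟨j, hj⟩ := this
      exact Finset.sum_pos' (fun i _ => sq_nonneg _) ⟨j, Finset.mem_univ j, by positivity⟩
    have hspos : 0 < s := Real.sqrt_pos.mpr hsum
    have hs2 : s ^ 2 = ∑ j, v j ^ 2 := Real.sq_sqrt hsum.le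
    set x : E := (PiLp.continuousLinearEquiv 2 ℝ (fun _ : k => ℝ)).symm (s⁻¹ • v) with hx_def
    have hxnorm : ‖x‖ = 1 := by
      rw [EuclideanSpace.norm_eq]
      have : ∀ i, ‖x i‖ ^ 2 = s⁻¹ ^ 2 * v i ^ 2 := by
        intro i
        simp [hx_def, Real.norm_eq_abs, mul_pow, sq_abs]
      simp only [this]
      rw [← Finset.mul_sum, ← hs2]
      rw [Real.sqrt_eq_iff_eq_sq] <;> field_simp <;> norm_num
    have hxs : x ∈ Metric.sphere (0 : E) 1 := by simp [mem_sphere_zero_iff_norm, hxnorm]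
    have hle : f x₀ ≤ f x := hmin hxs
    have hfx : f x = s⁻¹ ^ 2 * (v ⬝ᵥ A *ᵥ v) := by
      simp [f, g, hx_def, PiLp.coe_continuousLinearEquiv, smul_dotProduct, dotProduct_smul, mulVec_smul, smul_smul]
      ring
    rw [hfx] at hle
    have := mul_le_mul_of_nonneg_left hle (le_of_lt (by positivity : (0:ℝ) < s ^ 2))
    calc f x₀ * ∑ j, v j ^ 2 = s ^ 2 * f x₀ := by rw [hs2]; ring
    _ ≤ s ^ 2 * (s⁻¹ ^ 2 * (v ⬝ᵥ A *ᵥ v)) := this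
    _ = v ⬝ᵥ A *ᵥ v := by field_simp

theorem stmt19 (n m T : ℕ)
    (X₀ : Matrix (Fin n) (Fin T) ℝ) (U₀ : Matrix (Fin m) (Fin T) ℝ)
    (As : Matrix (Fin n ⊕ Fin m) (Fin n ⊕ Fin m) ℝ)
    (hAs : As = fromRows X₀ U₀ * (fromRows X₀ U₀)ᵀ) (hA : As.PosDef)
    (Bs : Matrix (Fin n ⊕ Fin m) (Fin n) ℝ)
    (Cs : Matrix (Fin n) (Fin n) ℝ) (hCs : Cs.IsSymm) :
    ∃ R : ℝ, ∀ Z : Matrix (Fin n) (Fin n ⊕ Fin m) ℝ,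
      (-(Z * As * Zᵀ + Z * Bs + Bsᵀ * Zᵀ + Cs)).PosSemidef →
      ∀ i j, |Z i j| ≤ R := by
  rcases Nat.eq_zero_or_pos n with rfl | hn
  · exact ⟨0, fun Z _ i => i.elim0⟩
  haveI : NeZero n := ⟨hn.ne'⟩
  haveI : Nonempty (Fin n) := ⟨⟨0, hn⟩⟩
  haveI : Nonempty (Fin n ⊕ Fin m) := ⟨Sum.inl ⟨0, hn⟩⟩
  obtain ⟨c, hc, hcoer⟩ := coercive hA
  -- basic facts about As
  have hAsym : Asᵀ = As := by
    have := hA.1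
    simpa [Matrix.IsHermitian, conjTranspose_eq_transpose_of_trivial] using this
  have hAunit := hA.isUnit
  have hinv1 : As * As⁻¹ = 1 := Matrix.mul_nonsing_inv _ ((Matrix.isUnit_iff_isUnit_det As).mp hAunit)
  have hinv2 : As⁻¹ * As = 1 := Matrix.nonsing_inv_mul _ ((Matrix.isUnit_iff_isUnit_det As).mp hAunit)
  have hinvsym : (As⁻¹)ᵀ = As⁻¹ := by
    rw [Matrix.transpose_nonsing_inv, hAsym]
  set M : Matrix (Fin n) (Fin n) ℝ := Bsᵀ * As⁻¹ * Bs - Cs with hM_def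
  set Mmax : ℝ := Finset.univ.sup' Finset.univ_nonempty (fun i : Fin n => M i i) with hMmax
  set Bmax : ℝ := Finset.univ.sup' Finset.univ_nonempty
      (fun p : Fin n × (Fin n ⊕ Fin m) => |(Bsᵀ * As⁻¹) p.1 p.2|) with hBmax
  refine ⟨Real.sqrt (Mmax / c) + Bmax, fun Z hZ i j => ?_⟩
  set W : Matrix (Fin n) (Fin n ⊕ Fin m) ℝ := Z + Bsᵀ * As⁻¹ with hW_def
  have hexpand : W * As * Wᵀ = Z * As * Zᵀ + Z * Bs + Bsᵀ * Zᵀ + Bsᵀ * As⁻¹ * Bs := by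
    rw [hW_def]
    simp only [Matrix.transpose_add, Matrix.transpose_mul, Matrix.transpose_transpose, hinvsym]
    rw [Matrix.add_mul, Matrix.add_mul, Matrix.mul_add, Matrix.mul_add]
    have e1 : Z * As * (As⁻¹ * Bs) = Z * Bs := by
      rw [Matrix.mul_assoc Z As, ← Matrix.mul_assoc As, hinv1, Matrix.one_mul]
    have e2 : Bsᵀ * As⁻¹ * As * Zᵀ = Bsᵀ * Zᵀ := by
      rw [Matrix.mul_assoc Bsᵀ, hinv2, Matrix.mul_one]
    have e3 : Bsᵀ * As⁻¹ * As * (As⁻¹ * Bs) = Bsᵀ * As⁻¹ * Bs := by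
      rw [Matrix.mul_assoc Bsᵀ, hinv2, Matrix.mul_one, Matrix.mul_assoc]
    rw [e1, e2, e3]
    abel
  have hPSD : (M - W * As * Wᵀ).PosSemidef := by
    have : M - W * As * Wᵀ = -(Z * As * Zᵀ + Z * Bs + Bsᵀ * Zᵀ + Cs) := by
      rw [hexpand, hM_def]; abel
    rw [this]; exact hZ
  -- diagonal bound
  have hdiag : ∀ i : Fin n, (W * As * Wᵀ) i i ≤ M i i := by
    intro i
    have h0 := hPSD.dotProduct_mulVec_nonneg (Pi.single i 1)
    have : (Pi.single i 1 : Fin n → ℝ) ⬝ᵥ (M - W * As * Wᵀ) *ᵥ Pi.single i 1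
        = (M - W * As * Wᵀ) i i := by
      simp [dotProduct, mulVec, Pi.single_apply, Finset.sum_ite_eq', Finset.sum_ite_eq]
    simp only [star_trivial] at h0
    rw [this] at h0
    simpa [Matrix.sub_apply] using h0
  have hrow : ∀ i : Fin n, c * (∑ l, W i l ^ 2) ≤ M i i := by
    intro i
    refine le_trans ?_ (hdiag i)
    have : (W * As * Wᵀ) i i = (W i) ⬝ᵥ As *ᵥ (W i) := by
      simp only [Matrix.mul_apply, dotProduct, mulVec, Matrix.transpose_apply,
        Finset.sum_mul, Finset.mul_sum]
      rw [Finset.sum_comm]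
      exact Finset.sum_congr rfl fun a _ => Finset.sum_congr rfl fun b _ => by ring
    rw [this]
    exact hcoer _
  have hWbound : |W i j| ≤ Real.sqrt (Mmax / c) := by
    have h1 : W i j ^ 2 ≤ Mmax / c := by
      have h2 : c * W i j ^ 2 ≤ c * ∑ l, W i l ^ 2 := by
        apply mul_le_mul_of_nonneg_left _ hc.le
        exact Finset.single_le_sum (f := fun l => W i l ^ 2) (fun l _ => sq_nonneg _)
          (Finset.mem_univ j)
      have h3 : M i i ≤ Mmax := Finset.le_sup' (fun i : Fin n => M i i) (Finset.mem_univ i)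
      have := le_trans h2 (le_trans (hrow i) h3)
      rw [le_div_iff₀ hc]; linarith
    calc |W i j| = Real.sqrt (W i j ^ 2) := (Real.sqrt_sq_eq_abs _).symm
    _ ≤ Real.sqrt (Mmax / c) := Real.sqrt_le_sqrt h1
  have hBb : |(Bsᵀ * As⁻¹) i j| ≤ Bmax :=
    Finset.le_sup' (fun p : Fin n × (Fin n ⊕ Fin m) => |(Bsᵀ * As⁻¹) p.1 p.2|)
      (Finset.mem_univ (i, j))
  have : Z i j = W i j - (Bsᵀ * As⁻¹) i j := by simp [hW_def]
  rw [this]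
  calc |W i j - (Bsᵀ * As⁻¹) i j| ≤ |W i j| + |(Bsᵀ * As⁻¹) i j| := abs_sub _ _
  _ ≤ Real.sqrt (Mmax / c) + Bmax := add_le_add hWbound hBb
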